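/- Suppose B = {i_1 < i_2 < ... < i_k} is a δ_s-cycle of 𝒢 (a nonempty element of Φ). Then the linear encoding of codelength n−1 that transmits the symbol X_j for every j ∈ [n]\B together with the k−1 sums X_{i_1}+X_{i_2}, X_{i_2}+X_{i_3}, ..., X_{i_{k−1}}+X_{i_k} is a valid (δ_s,𝒢)-ICSIE encoding; in particular, if 𝒢 is not δ_s-acyclic then N_opt^q(δ_s,𝒢) ≤ n−1. -/

import Mathlib

open Finset

/-- Restriction of a vector to the coordinates in a finite index set. -/
def proj {ι 𝔽 : Type*} (A : Finset ι) (x : ι → 𝔽) : {a // a ∈ A} → 𝔽 :=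
  fun a => x a.1

/-- `enc` is a valid (δ,𝒢)-ICSIE encoding: decoders exist recovering the wanted
messages from the codeword and side information with at most `δ r` errors. -/
def ValidEnc (𝔽 : Type*) [DecidableEq 𝔽] {ι R C : Type*}
    (X f : R → Finset ι) (δ : R → ℕ) (enc : (ι → 𝔽) → C) : Prop :=
  ∃ D : (r : R) → C → ({a // a ∈ X r} → 𝔽) → ({a // a ∈ f r} → 𝔽),
    ∀ (r : R) (x : ι → 𝔽) (xt : {a // a ∈ X r} → 𝔽),
      hammingDist (proj (X r) x) xt ≤ δ r → D r (enc x) xt = proj (f r) x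

/-- Optimal codelength of a (δ,𝒢)-ICSIE. -/
noncomputable def Nopt (𝔽 : Type*) [DecidableEq 𝔽] {ι R : Type*}
    (X f : R → Finset ι) (δ : R → ℕ) : ℕ :=
  sInf {N | ∃ enc : (ι → 𝔽) → (Fin N → 𝔽), ValidEnc 𝔽 X f δ enc}

/-- The family Φ: subsets `B` such that every receiver wanting a message of `B`
has at least `2δ+1` side information symbols inside `B`. -/
def Phi {ι R : Type*} [DecidableEq ι] (X f : R → Finset ι) (δ : R → ℕ) :
    Set (Finset ι) :=
  {B | ∀ r : R, (f r ∩ B).Nonempty → 2 * δ r + 1 ≤ (X r ∩ B).card}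

/-- if `B` is a δ_s-cycle (a nonempty member of Φ), then the
encoding of codelength `n-1` transmitting `X_j` for `j ∉ B` together with the
consecutive sums `X_{i_1}+X_{i_2}, …, X_{i_{k-1}}+X_{i_k}` along the increasing
enumeration `i_1 < … < i_k` of `B` is a valid (δ_s,𝒢)-ICSIE encoding; in
particular `N_opt ≤ n - 1`. -/
def trans' {𝔽 : Type*} [Field 𝔽] (s : ℕ → 𝔽) : ℕ → 𝔽 → 𝔽
  | 0, v => v
  | t+1, v => s t - trans' s t v

def itrans' {𝔽 : Type*} [Field 𝔽] (s : ℕ → 𝔽) : ℕ → 𝔽 → 𝔽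
  | 0, w => w
  | t+1, w => itrans' s t (s t - w)

lemma itrans'_trans' {𝔽 : Type*} [Field 𝔽] (s : ℕ → 𝔽) :
    ∀ t v, itrans' s t (trans' s t v) = v
  | 0, v => rfl
  | t+1, v => by
      simp only [trans', itrans', sub_sub_cancel]
      exact itrans'_trans' s t v

open Classical in
noncomputable def majority {𝔽 : Type*} [DecidableEq 𝔽] [Zero 𝔽] {α : Type*} [Fintype α]
    (δ : ℕ) (vote : α → 𝔽) : 𝔽 :=
  if h : ∃ w : 𝔽, δ < (Finset.univ.filter fun a => vote a = w).card then h.choose else 0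

lemma majority_eq {𝔽 : Type*} [DecidableEq 𝔽] [Zero 𝔽] {α : Type*} [Fintype α]
    {δ : ℕ} {vote : α → 𝔽} {w : 𝔽}
    (hw : δ < (Finset.univ.filter fun a => vote a = w).card)
    (huniq : ∀ w', δ < (Finset.univ.filter fun a => vote a = w').card → w' = w) :
    majority δ vote = w := by
  rw [majority, dif_pos ⟨w, hw⟩]
  exact huniq _ (⟨w, hw⟩ : ∃ w', δ < (Finset.univ.filter fun a => vote a = w').card).choose_spec

lemma validEnc_equiv {𝔽 : Type*} [DecidableEq 𝔽] {ι R C C' : Type*}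
    {X f : R → Finset ι} {δ : R → ℕ} {enc : (ι → 𝔽) → C}
    (g : C ≃ C') (h : ValidEnc 𝔽 X f δ enc) :
    ValidEnc 𝔽 X f δ (fun x => g (enc x)) := by
  obtain ⟨D, hD⟩ := h
  exact ⟨fun r c' => D r (g.symm c'), fun r x xt hx => by simpa using hD r x xt hx⟩

theorem validEnc_of_deltaCycle
    {𝔽 : Type*} [Field 𝔽] [Fintype 𝔽] [DecidableEq 𝔽]
    {n m : ℕ} (X f : Fin m → Finset (Fin n)) (δ : Fin m → ℕ)
    (hdisj : ∀ i, Disjoint (f i) (X i))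
    (B : Finset (Fin n)) (hB : B.Nonempty) (hBcyc : B ∈ Phi X f δ) :
    ValidEnc 𝔽 X f δ
      (fun x => (proj (Finset.univ \ B) x,
        fun j : Fin (B.card - 1) =>
          x (B.orderEmbOfFin rfl ⟨j.1, by have := j.2; omega⟩) +
          x (B.orderEmbOfFin rfl ⟨j.1 + 1, by have := j.2; omega⟩)))
      ∧ Nopt 𝔽 X f δ ≤ n - 1 := by
  classical
  have hk : 1 ≤ B.card := Finset.card_pos.mpr hB
  have hkn : B.card ≤ n := by simpa using Finset.card_le_card (Finset.subset_univ B)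
  have hV : ValidEnc 𝔽 X f δ
      (fun x => (proj (Finset.univ \ B) x,
        fun j : Fin (B.card - 1) =>
          x (B.orderEmbOfFin rfl ⟨j.1, by have := j.2; omega⟩) +
          x (B.orderEmbOfFin rfl ⟨j.1 + 1, by have := j.2; omega⟩))) := by
    refine ⟨fun r c xt b =>
      if hb : b.1 ∈ B then
        majority (δ r) (fun a : {a // a ∈ X r ∩ B} =>
          trans' (fun t => if h : t < B.card - 1 then c.2 ⟨t, h⟩ else 0)
            (((B.orderIsoOfFin rfl).symm ⟨b.1, hb⟩ : Fin B.card) : ℕ)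
            (itrans' (fun t => if h : t < B.card - 1 then c.2 ⟨t, h⟩ else 0)
              (((B.orderIsoOfFin rfl).symm ⟨a.1, (Finset.mem_inter.mp a.2).2⟩ : Fin B.card) : ℕ)
              (xt ⟨a.1, (Finset.mem_inter.mp a.2).1⟩)))
      else c.1 ⟨b.1, Finset.mem_sdiff.mpr ⟨Finset.mem_univ _, hb⟩⟩, ?_⟩
    intro r x xt hdist
    funext b
    dsimp only
    by_cases hb : b.1 ∈ B
    · rw [dif_pos hb]
      set s : ℕ → 𝔽 := fun t => if h : t < B.card - 1 then
          x (B.orderEmbOfFin rfl ⟨t, by omega⟩) + x (B.orderEmbOfFin rfl ⟨t + 1, by omega⟩)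
          else 0 with hsdef
      have hemb : ∀ (a : Fin n) (ha : a ∈ B),
          B.orderEmbOfFin rfl ((B.orderIsoOfFin rfl).symm ⟨a, ha⟩) = a := by
        intro a ha
        rw [← Finset.coe_orderIsoOfFin_apply, OrderIso.apply_symm_apply]
      have htrans : ∀ t (ht : t < B.card),
          trans' s t (x (B.orderEmbOfFin rfl ⟨0, hk⟩)) = x (B.orderEmbOfFin rfl ⟨t, ht⟩) := by
        intro t
        induction t with
        | zero => intro ht; rfl
        | succ t ih =>
          intro ht
          have h1 : t < B.card := by omega
          have h2 : t < B.card - 1 := by omega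
          show s t - trans' s t _ = _
          rw [ih h1, hsdef]
          simp only [dif_pos h2]
          ring_nf
      have hvote : ∀ (a : {a // a ∈ X r ∩ B}),
          xt ⟨a.1, (Finset.mem_inter.mp a.2).1⟩ = x a.1 →
          trans' s (((B.orderIsoOfFin rfl).symm ⟨b.1, hb⟩ : Fin B.card) : ℕ)
            (itrans' s (((B.orderIsoOfFin rfl).symm ⟨a.1, (Finset.mem_inter.mp a.2).2⟩ : Fin B.card) : ℕ)
              (xt ⟨a.1, (Finset.mem_inter.mp a.2).1⟩)) = x b.1 := by
        intro a hxt
        set ia : Fin B.card := (B.orderIsoOfFin rfl).symm ⟨a.1, (Finset.mem_inter.mp a.2).2⟩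
        set ib : Fin B.card := (B.orderIsoOfFin rfl).symm ⟨b.1, hb⟩
        have ha' : x a.1 = trans' s ia.1 (x (B.orderEmbOfFin rfl ⟨0, hk⟩)) := by
          rw [htrans ia.1 ia.2]
          exact congrArg x (hemb a.1 (Finset.mem_inter.mp a.2).2).symm
        rw [hxt, ha', itrans'_trans', htrans ib.1 ib.2]
        exact congrArg x (hemb b.1 hb)
      -- counting
      have hcardXB : 2 * δ r + 1 ≤ (X r ∩ B).card :=
        hBcyc r ⟨b.1, Finset.mem_inter.mpr ⟨b.2, hb⟩⟩
      set T : Finset {a // a ∈ X r ∩ B} :=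
        Finset.univ.filter (fun a => xt ⟨a.1, (Finset.mem_inter.mp a.2).1⟩ ≠ x a.1) with hTdef
      have hT : T.card ≤ δ r := by
        refine le_trans ?_ hdist
        rw [hammingDist]
        refine Finset.card_le_card_of_injOn
          (fun a => ⟨a.1, (Finset.mem_inter.mp a.2).1⟩) ?_ ?_
        · intro a haT
          rw [hTdef, Finset.mem_coe, Finset.mem_filter] at haT
          rw [Finset.mem_coe, Finset.mem_filter]
          exact ⟨Finset.mem_univ _, fun h => haT.2 h.symm⟩
        · intro a _ a' _ hh
          have hh' := congrArg Subtype.val hh; exact Subtype.ext hh'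
      set V : {a // a ∈ X r ∩ B} → 𝔽 := fun a =>
          trans' s (((B.orderIsoOfFin rfl).symm ⟨b.1, hb⟩ : Fin B.card) : ℕ)
            (itrans' s (((B.orderIsoOfFin rfl).symm ⟨a.1, (Finset.mem_inter.mp a.2).2⟩ : Fin B.card) : ℕ)
              (xt ⟨a.1, (Finset.mem_inter.mp a.2).1⟩)) with hVdef
      have hcardU : Fintype.card {a // a ∈ X r ∩ B} = (X r ∩ B).card := Fintype.card_coe _
      have hgood : δ r < (Finset.univ.filter fun a => V a = x b.1).card := by
        have hsub : Finset.univ \ T ⊆ Finset.univ.filter fun a => V a = x b.1 := by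
          intro a ha
          rw [Finset.mem_sdiff, hTdef, Finset.mem_filter] at ha
          rw [Finset.mem_filter]
          refine ⟨Finset.mem_univ _, hvote a ?_⟩
          by_contra hne
          exact ha.2 ⟨Finset.mem_univ _, hne⟩
        have h1 := Finset.card_le_card hsub
        have h2 : (Finset.univ \ T).card = Fintype.card {a // a ∈ X r ∩ B} - T.card := by
          rw [Finset.card_sdiff_of_subset (Finset.subset_univ _), Finset.card_univ]
        omega
      have huniq : ∀ w', δ r < (Finset.univ.filter fun a => V a = w').card → w' = x b.1 := by
        intro w' hw'
        by_contra hne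
        have hsub : (Finset.univ.filter fun a => V a = w') ⊆ T := by
          intro a ha
          rw [Finset.mem_filter] at ha
          rw [hTdef, Finset.mem_filter]
          exact ⟨Finset.mem_univ _, fun heq => hne (ha.2.symm.trans (hvote a heq))⟩
        have := Finset.card_le_card hsub
        omega
      exact majority_eq hgood huniq
    · rw [dif_neg hb]
      rfl
  refine ⟨hV, ?_⟩
  have hcard : Fintype.card ({a // a ∈ Finset.univ \ B} ⊕ Fin (B.card - 1)) = n - 1 := by
    rw [Fintype.card_sum, Fintype.card_coe, Fintype.card_fin,
      Finset.card_sdiff_of_subset (Finset.subset_univ B), Finset.card_univ, Fintype.card_fin]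
    omega
  let g : (({a // a ∈ Finset.univ \ B} → 𝔽) × (Fin (B.card - 1) → 𝔽)) ≃ (Fin (n - 1) → 𝔽) :=
    (Equiv.sumArrowEquivProdArrow _ _ 𝔽).symm.trans
      (Equiv.arrowCongr (Fintype.equivFinOfCardEq hcard) (Equiv.refl 𝔽))
  exact Nat.sInf_le ⟨_, validEnc_equiv g hV⟩
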